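/- If G is a Latin square graph of even order, then both G and its complement are 1-factorable (class 1). -/

import Mathlib

set_option maxHeartbeats 1000000


open SimpleGraph

/-- The chromatic index (edge-chromatic number) of a graph, defined as the
chromatic number of its line graph. -/
noncomputable def edgeChromaticNumber {V : Type*} (G : SimpleGraph V) : ℕ∞ :=
  G.lineGraph.chromaticNumber

/-- A graph is 1-factorable if its edge set can be partitioned into
perfect matchings (1-factors). -/
def IsOneFactorable {V : Type*} (G : SimpleGraph V) : Prop :=
  ∃ F : Set G.Subgraph, (∀ M ∈ F, M.IsPerfectMatching) ∧
    ∀ e ∈ G.edgeSet, ∃! M, M ∈ F ∧ e ∈ M.edgeSet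

/-- A regular graph is class 1 if its chromatic index equals its degree. -/
def IsClass1 {V : Type*} (G : SimpleGraph V) : Prop :=
  ∃ k : ℕ, (∀ v, Nat.card (G.neighborSet v) = k) ∧ edgeChromaticNumber G = k

/-- `L` is a Latin square of order `m`: every row and every column is a bijection. -/
def IsLatinSquare {m : ℕ} (L : Fin m → Fin m → Fin m) : Prop :=
  (∀ i, Function.Bijective (L i)) ∧ (∀ j, Function.Bijective fun i => L i j)



namespace RR
variable (n : ℕ) [NeZero n]

/-- embed `ZMod n` into `Fin (n+1)` -/
def ι (u : ZMod n) : Fin (n + 1) := ⟨u.val, Nat.lt_succ_of_lt (ZMod.val_lt u)⟩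

def lastF : Fin (n + 1) := ⟨n, Nat.lt_succ_self n⟩

lemma ι_ne_last (u : ZMod n) : ι n u ≠ lastF n := by
  apply Fin.ne_of_val_ne
  exact Nat.ne_of_lt (ZMod.val_lt u)

lemma ι_inj {u v : ZMod n} (h : ι n u = ι n v) : u = v := by
  simp only [ι, Fin.ext_iff] at h
  exact ZMod.val_injective n h

lemma cast_ι (u : ZMod n) : (((ι n u).val : ℕ) : ZMod n) = u := by
  simp only [ι]
  exact ZMod.natCast_rightInverse u

/-- round robin pairing, factor `s` -/
noncomputable def rr (s : ZMod n) (x : Fin (n + 1)) : Fin (n + 1) :=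
  if x = lastF n then ι n s
  else if ((x.val : ℕ) : ZMod n) = s then lastF n
  else ι n (2 * s - (x.val : ZMod n))

lemma eq_ι_of_ne_last {x : Fin (n + 1)} (h : x ≠ lastF n) :
    ∃ u, x = ι n u := by
  have hlt : x.val < n := by
    rcases Nat.lt_succ_iff_lt_or_eq.mp x.isLt with h' | h'
    · exact h'
    · exact absurd (Fin.ext h') h
  exact ⟨((x.val : ℕ) : ZMod n), by simp only [ι, Fin.ext_iff, ZMod.val_cast_of_lt hlt]⟩

variable (hn : Odd n)
include hn

lemma two_mul_inj {a b : ZMod n} (h : 2 * a = 2 * b) : a = b := by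
  have h2 : IsUnit (2 : ZMod n) := by
    have := (ZMod.isUnit_iff_coprime 2 n).mpr (Odd.coprime_two_left hn)
    simpa using this
  exact (IsUnit.mul_right_inj h2).mp h

lemma two_mul_surj (c : ZMod n) : ∃ s : ZMod n, 2 * s = c := by
  have h2 : IsUnit (2 : ZMod n) := by
    have := (ZMod.isUnit_iff_coprime 2 n).mpr (Odd.coprime_two_left hn)
    simpa using this
  obtain ⟨u, hu⟩ := h2
  exact ⟨u⁻¹ * c, by rw [← hu, ← mul_assoc, Units.mul_inv, one_mul]⟩

omit hn in
lemma rr_last (s : ZMod n) : rr n s (lastF n) = ι n s := by simp [rr]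

omit hn in
lemma rr_ι_self (s : ZMod n) : rr n s (ι n s) = lastF n := by
  simp [rr, ι_ne_last, cast_ι]

omit hn in
lemma rr_ι_of_ne {s u : ZMod n} (h : u ≠ s) : rr n s (ι n u) = ι n (2 * s - u) := by
  simp [rr, ι_ne_last, cast_ι, h]

lemma rr_ne (s : ZMod n) (x : Fin (n + 1)) : rr n s x ≠ x := by
  by_cases hx : x = lastF n
  · subst hx; rw [rr_last]; exact ι_ne_last n s
  · obtain ⟨u, rfl⟩ := eq_ι_of_ne_last n hx
    by_cases hu : u = s
    · subst hu; rw [rr_ι_self]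
      exact fun h => (ι_ne_last n u) h.symm
    · rw [rr_ι_of_ne n hu]
      intro h
      have h2 := ι_inj n h
      apply hu
      apply two_mul_inj n hn
      linear_combination -h2

lemma rr_invol (s : ZMod n) (x : Fin (n + 1)) : rr n s (rr n s x) = x := by
  by_cases hx : x = lastF n
  · subst hx; rw [rr_last, rr_ι_self]
  · obtain ⟨u, rfl⟩ := eq_ι_of_ne_last n hx
    by_cases hu : u = s
    · subst hu; rw [rr_ι_self, rr_last]
    · rw [rr_ι_of_ne n hu]
      have h2 : 2 * s - u ≠ s := by
        intro h
        apply hu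
        apply two_mul_inj n hn
        linear_combination -2*h
      rw [rr_ι_of_ne n h2]
      congr 1
      ring

lemma rr_exists {x y : Fin (n + 1)} (h : x ≠ y) : ∃ s, rr n s x = y := by
  by_cases hx : x = lastF n
  · subst hx
    obtain ⟨v, rfl⟩ := eq_ι_of_ne_last n (fun hy => h hy.symm)
    exact ⟨v, rr_last n v⟩
  · obtain ⟨u, rfl⟩ := eq_ι_of_ne_last n hx
    by_cases hy : y = lastF n
    · subst hy
      exact ⟨u, rr_ι_self n u⟩
    · obtain ⟨v, rfl⟩ := eq_ι_of_ne_last n hy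
      obtain ⟨s, hs⟩ := two_mul_surj n hn (u + v)
      have huv : u ≠ v := fun huv => h (by rw [huv])
      have hus : u ≠ s := by
        intro hus
        apply huv
        apply two_mul_inj n hn
        linear_combination 2*hs + 4*hus
      refine ⟨s, ?_⟩
      rw [rr_ι_of_ne n hus]
      congr 1
      linear_combination hs

lemma rr_unique {s s' : ZMod n} {x y : Fin (n + 1)} (h : rr n s x = y)
    (h' : rr n s' x = y) : s = s' := by
  by_cases hx : x = lastF n
  · subst hx
    rw [rr_last] at h h'
    exact ι_inj n (h.trans h'.symm)
  · obtain ⟨u, rfl⟩ := eq_ι_of_ne_last n hx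
    by_cases hu : u = s
    · subst hu
      rw [rr_ι_self] at h
      by_cases hu' : u = s'
      · exact hu'
      · rw [rr_ι_of_ne n hu'] at h'
        exact absurd (h'.trans h.symm) (ι_ne_last n _)
    · rw [rr_ι_of_ne n hu] at h
      by_cases hu' : u = s'
      · subst hu'
        rw [rr_ι_self] at h'
        exact absurd (h.trans h'.symm) (ι_ne_last n _)
      · rw [rr_ι_of_ne n hu'] at h'
        have h2 := ι_inj n (h.trans h'.symm)
        apply two_mul_inj n hn
        linear_combination h2

end RR


lemma card_key {m : ℕ} (P : Fin m → Prop) [DecidablePred P] :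
    Nat.card {x // P x} = (Finset.univ.filter P).card := by
  rw [Nat.card_eq_fintype_card, Fintype.card_subtype]

lemma bip_decomp {m : ℕ} (k : ℕ) (A : Fin m → Fin m → Prop)
    (hrow : ∀ j, Nat.card {j' // A j j'} = k)
    (hcol : ∀ j', Nat.card {j // A j j'} = k) :
    ∃ g : Fin k → (Fin m → Fin m), (∀ c, Function.Bijective (g c)) ∧
      (∀ j j', A j j' ↔ ∃ c, g c j = j') ∧
      (∀ c c' j, g c j = g c' j → c = c') := by
  classical
  induction k generalizing A with
  | zero =>
    refine ⟨Fin.elim0, fun c => c.elim0, fun j j' => ?_, fun c => c.elim0⟩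
    constructor
    · intro h
      have h1 : Nonempty {j'' // A j j''} := ⟨⟨j', h⟩⟩
      have h2 := Nat.card_pos (α := {j'' // A j j''})
      rw [hrow j] at h2
      exact absurd h2 (lt_irrefl 0)
    · rintro ⟨c, -⟩; exact c.elim0
  | succ k ih =>
    set t : Fin m → Finset (Fin m) := fun j => Finset.univ.filter (A j ·) with ht
    have hrow' : ∀ j, (t j).card = k + 1 := fun j => by
      rw [ht, ← card_key]; exact hrow j
    have hcol' : ∀ j', (Finset.univ.filter (A · j')).card = k + 1 := fun j' => by
      rw [← card_key]; exact hcol j'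
    -- Hall condition
    have hall : ∀ s : Finset (Fin m), s.card ≤ (s.biUnion t).card := by
      intro s
      set B := s.biUnion t with hB
      have hPQ : (s.biUnion fun j => (t j).image fun j' => (j, j')) ⊆
          B.biUnion fun j' => (Finset.univ.filter (A · j')).image fun j => (j, j') := by
        intro p hp
        simp only [Finset.mem_biUnion, Finset.mem_image] at hp ⊢
        obtain ⟨j, hj, j', hj', rfl⟩ := hp
        have hAjj' : A j j' := by
          rw [ht] at hj'; simpa using hj'
        refine ⟨j', ?_, j, by simpa using hAjj', rfl⟩
        rw [hB]
        exact Finset.mem_biUnion.mpr ⟨j, hj, hj'⟩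
      have hP : (s.biUnion fun j => (t j).image fun j' => (j, j')).card = s.card * (k+1) := by
        rw [Finset.card_biUnion]
        · rw [Finset.sum_congr rfl (fun j _ => ?_), Finset.sum_const, smul_eq_mul]
          rw [Finset.card_image_of_injective _ (fun a b h => by simpa using h), hrow' j]
        · intro j _ j2 _ hne
          rw [Function.onFun, Finset.disjoint_left]
          intro p hp hp2
          simp only [Finset.mem_image] at hp hp2
          obtain ⟨a1, -, h1⟩ := hp
          obtain ⟨b1, -, h2⟩ := hp2
          rw [← h1] at h2
          exact hne ((congrArg Prod.fst h2).symm)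
      have hQ : (B.biUnion fun j' => (Finset.univ.filter (A · j')).image fun j => (j, j')).card
          = B.card * (k+1) := by
        rw [Finset.card_biUnion]
        · rw [Finset.sum_congr rfl (fun j' _ => ?_), Finset.sum_const, smul_eq_mul]
          rw [Finset.card_image_of_injective _ (fun a b h => by simpa using h), hcol' j']
        · intro j' _ j2 _ hne
          rw [Function.onFun, Finset.disjoint_left]
          intro p hp hp2
          simp only [Finset.mem_image] at hp hp2
          obtain ⟨a1, -, h1⟩ := hp
          obtain ⟨b1, -, h2⟩ := hp2
          rw [← h1] at h2
          exact hne ((congrArg Prod.snd h2).symm)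
      have := Finset.card_le_card hPQ
      rw [hP, hQ] at this
      exact Nat.le_of_mul_le_mul_right this (Nat.succ_pos k)
    obtain ⟨f, hfinj, hf⟩ := (Finset.all_card_le_biUnion_card_iff_exists_injective t).mp hall
    have hfA : ∀ j, A j (f j) := by
      intro j
      have := hf j
      rw [ht] at this
      simpa using this
    have hbij : Function.Bijective f := Finite.injective_iff_bijective.mp hfinj
    set E := Equiv.ofBijective f hbij with hE
    have hEf : ∀ j, E j = f j := fun _ => rfl
    set A' : Fin m → Fin m → Prop := fun j j' => A j j' ∧ j' ≠ f j with hA'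
    have hrowA' : ∀ j, Nat.card {j' // A' j j'} = k := by
      intro j
      rw [card_key]
      have : Finset.univ.filter (A' j ·) = (t j).erase (f j) := by
        ext j'
        simp only [Finset.mem_erase, Finset.mem_filter, ht, hA', Finset.mem_univ, true_and]
        tauto
      rw [this, Finset.card_erase_of_mem (hf j), hrow' j]
      omega
    have hcolA' : ∀ j', Nat.card {j // A' j j'} = k := by
      intro j'
      rw [card_key]
      have : Finset.univ.filter (A' · j') = (Finset.univ.filter (A · j')).erase (E.symm j') := by
        ext j
        simp only [Finset.mem_erase, Finset.mem_filter, hA', Finset.mem_univ, true_and]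
        have : j' ≠ f j ↔ j ≠ E.symm j' := by
          rw [ne_eq, ne_eq, not_iff_not, Equiv.eq_symm_apply, hEf]
          exact eq_comm
        tauto
      rw [this, Finset.card_erase_of_mem, hcol' j']
      · exact Nat.succ_sub_one (k+1) ▸ rfl
      · simp only [Finset.mem_filter, Finset.mem_univ, true_and]
        have h5 := hfA (E.symm j')
        have h6 : f (E.symm j') = j' := E.apply_symm_apply j'
        rw [h6] at h5
        exact h5
    obtain ⟨g', hg'bij, hg'cov, hg'dis⟩ := ih A' hrowA' hcolA'
    refine ⟨Fin.cases f g', ?_, ?_, ?_⟩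
    · intro c
      refine Fin.cases ?_ ?_ c
      · exact hbij
      · intro c'; exact hg'bij c'
    · intro j j'
      constructor
      · intro h
        by_cases hj' : j' = f j
        · exact ⟨0, hj'.symm⟩
        · obtain ⟨c, hc⟩ := (hg'cov j j').mp ⟨h, hj'⟩
          exact ⟨c.succ, hc⟩
      · rintro ⟨c, rfl⟩
        refine Fin.cases ?_ ?_ c
        · exact hfA j
        · intro c'
          exact ((hg'cov j _).mpr ⟨c', rfl⟩).1
    · intro c c' j
      refine Fin.cases ?_ ?_ c <;> [skip; intro c1] <;> refine Fin.cases ?_ ?_ c' <;>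
        first
        | (intro h; rfl)
        | (intro c2 h
           exact absurd h (fun hh => ((hg'cov j _).mpr ⟨c2, rfl⟩).2 hh.symm))
        | (intro h
           exact absurd h (fun hh => ((hg'cov j _).mpr ⟨c1, rfl⟩).2 hh))
        | (intro c2 h
           exact congrArg Fin.succ (hg'dis c1 c2 j h))



lemma countAux {m t : ℕ} (L : Fin t → Fin m → Fin m → Fin m)
    (hlatin : ∀ a, IsLatinSquare (L a))
    (horth : ∀ a b, a ≠ b →
      Function.Injective fun p : Fin m × Fin m => (L a p.1 p.2, L b p.1 p.2))
    (i i' : Fin m) (hne : i ≠ i') (j : Fin m) :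
    Nat.card {j' // j' ≠ j ∧ ∀ a, L a i' j' ≠ L a i j} = m - (t + 1) := by
  classical
  set E : Fin t → (Fin m ≃ Fin m) :=
    fun a => Equiv.ofBijective (L a i') ((hlatin a).1 i') with hE
  set FF : Option (Fin t) → Fin m := fun o => Option.rec j (fun a => (E a).symm (L a i j)) o
    with hFF
  have hFFnone : FF none = j := rfl
  have hFFsome : ∀ a, FF (some a) = (E a).symm (L a i j) := fun a => rfl
  have hEapp : ∀ a x, E a x = L a i' x := fun a x => rfl
  have hkey : ∀ a, L a i' (FF (some a)) = L a i j := by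
    intro a
    rw [hFFsome, ← hEapp, Equiv.apply_symm_apply]
  have hFFinj : Function.Injective FF := by
    intro o o' h
    match o, o' with
    | none, none => rfl
    | none, some a =>
      exfalso
      have h2 : j = FF (some a) := by rw [← hFFnone]; exact h
      have h1 := hkey a
      rw [← h2] at h1
      exact hne (((hlatin a).2 j).1 h1).symm
    | some a, none =>
      exfalso
      have h2 : j = FF (some a) := by rw [← hFFnone]; exact h.symm
      have h1 := hkey a
      rw [← h2] at h1
      exact hne (((hlatin a).2 j).1 h1).symm
    | some a, some b =>
      by_cases hab : a = b
      · rw [hab]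
      · exfalso
        have ha : L a i' (FF (some a)) = L a i j := hkey a
        have hb : L b i' (FF (some a)) = L b i j := by rw [h]; exact hkey b
        have := horth a b hab (a₁ := (i', FF (some a))) (a₂ := (i, j))
          (by simp only [Prod.mk.injEq]; exact ⟨ha, hb⟩)
        exact hne (congrArg Prod.fst this).symm
  have hset : (Finset.univ.filter (fun j' => ¬ (j' ≠ j ∧ ∀ a, L a i' j' ≠ L a i j)))
      = Finset.univ.image FF := by
    ext j'
    simp only [Finset.mem_filter, Finset.mem_univ, true_and, Finset.mem_image]
    push_neg
    constructor
    · intro h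
      by_cases hj : j' = j
      · exact ⟨none, hj.symm⟩
      · obtain ⟨a, ha⟩ := h hj
        refine ⟨some a, ?_⟩
        rw [hFFsome, Equiv.symm_apply_eq]
        rw [hEapp]
        exact ha.symm
    · rintro ⟨o, rfl⟩ hFFo
      match o with
      | none => exact absurd hFFnone hFFo
      | some a => exact ⟨a, hkey a⟩
  have hcard1 : (Finset.univ.image FF).card = t + 1 := by
    rw [Finset.card_image_of_injective _ hFFinj]
    simp
  have hsplit := Finset.card_filter_add_card_filter_not
    (s := Finset.univ) (p := fun j' => j' ≠ j ∧ ∀ a, L a i' j' ≠ L a i j)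
  rw [hset, hcard1] at hsplit
  rw [card_key]
  have hm : (Finset.univ : Finset (Fin m)).card = m := by simp
  omega


section Helpers

/-- Build a subgraph from a symmetric relation contained in `G`. -/
def mkMatching {V : Type*} (G : SimpleGraph V) (R : V → V → Prop)
    (hsymm : ∀ p q, R p q → R q p) (hsub : ∀ p q, R p q → G.Adj p q) : G.Subgraph where
  verts := Set.univ
  Adj := R
  adj_sub := fun h => hsub _ _ h
  edge_vert := fun _ => Set.mem_univ _
  symm := ⟨fun p q h => hsymm p q h⟩

lemma mkMatching_isPerfectMatching {V : Type*} (G : SimpleGraph V) (R : V → V → Prop)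
    (hsymm : ∀ p q, R p q → R q p) (hsub : ∀ p q, R p q → G.Adj p q)
    (huniq : ∀ v, ∃! w, R v w) :
    (mkMatching G R hsymm hsub).IsPerfectMatching := by
  constructor
  · intro v _
    exact huniq v
  · intro v
    exact Set.mem_univ v

end Helpers

/-- Corollary 2.4 -/
theorem stmt_6 (m t : ℕ) (hm : 2 ≤ m) (L : Fin t → Fin m → Fin m → Fin m)
    (hlatin : ∀ a, IsLatinSquare (L a))
    (horth : ∀ a b, a ≠ b →
      Function.Injective fun p : Fin m × Fin m => (L a p.1 p.2, L b p.1 p.2))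
    (G : SimpleGraph (Fin m × Fin m))
    (hadj : ∀ p q, G.Adj p q ↔
      p ≠ q ∧ (p.1 = q.1 ∨ p.2 = q.2 ∨ ∃ a, L a p.1 p.2 = L a q.1 q.2))
    (heven : Even (m * m)) :
    IsOneFactorable G ∧ IsOneFactorable Gᶜ := by
  classical
  obtain ⟨n, rfl⟩ : ∃ n, m = n + 1 := ⟨m - 1, by omega⟩
  have hmeven : Even (n + 1) := by rcases Nat.even_mul.mp heven with h | h <;> exact h
  have hn : Odd n := Nat.not_even_iff_odd.mp (Nat.even_add_one.mp hmeven)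
  haveI : NeZero n := ⟨fun h => by rw [h] at hn; simp [Nat.odd_iff] at hn⟩
  -- coordinates of the orthogonal array
  let x : Option (Option (Fin t)) → Fin (n+1) × Fin (n+1) → Fin (n+1) :=
    fun c p => Option.rec p.1 (fun c' => Option.rec p.2 (fun a => L a p.1 p.2) c') c
  let dd : Option (Option (Fin t)) → Option (Option (Fin t)) :=
    fun c => Option.rec (some none) (fun c' => Option.rec none (fun _ => some none) c') c
  have hcd : ∀ c, c ≠ dd c := by rintro (_ | _ | a) <;> simp [dd]
  have key : ∀ c d, c ≠ d → ∀ p q, x c p = x c q → x d p = x d q → p = q := by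
    rintro (_ | _ | a) (_ | _ | b) hne p q h1 h2
    · exact absurd rfl hne
    · exact Prod.ext h1 h2
    · have h2' : L b p.1 p.2 = L b q.1 q.2 := h2
      rw [show (p.1 : Fin (n+1)) = q.1 from h1] at h2'
      exact Prod.ext h1 (((hlatin b).1 q.1).1 h2')
    · exact Prod.ext h2 h1
    · exact absurd rfl hne
    · have h2' : L b p.1 p.2 = L b q.1 q.2 := h2
      rw [show (p.2 : Fin (n+1)) = q.2 from h1] at h2'
      have h3 : (fun i => L b i q.2) p.1 = (fun i => L b i q.2) q.1 := h2'
      exact Prod.ext (((hlatin b).2 q.2).1 h3) h1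
    · have h1' : L a p.1 p.2 = L a q.1 q.2 := h1
      rw [show (p.1 : Fin (n+1)) = q.1 from h2] at h1'
      exact Prod.ext h2 (((hlatin a).1 q.1).1 h1')
    · have h1' : L a p.1 p.2 = L a q.1 q.2 := h1
      rw [show (p.2 : Fin (n+1)) = q.2 from h2] at h1'
      have h3 : (fun i => L a i q.2) p.1 = (fun i => L a i q.2) q.1 := h1'
      exact Prod.ext (((hlatin a).2 q.2).1 h3) h2
    · have hab : a ≠ b := by rintro rfl; exact absurd rfl hne
      exact horth a b hab (by simp only [Prod.mk.injEq]; exact ⟨h1, h2⟩)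
  have hbijpair : ∀ c d, c ≠ d → Function.Bijective (fun p : Fin (n+1) × Fin (n+1) => (x c p, x d p)) :=
    fun c d hne => Finite.injective_iff_bijective.mp
      (fun p q h => key c d hne p q (congrArg Prod.fst h) (congrArg Prod.snd h))
  -- Part 1 : G is 1-factorable
  let RG : Option (Option (Fin t)) → ZMod n → (Fin (n+1) × Fin (n+1)) → (Fin (n+1) × Fin (n+1)) → Prop :=
    fun c r p q => x c p = x c q ∧ x (dd c) q = RR.rr n r (x (dd c) p)
  have hRGsymm : ∀ c r p q, RG c r p q → RG c r q p := by
    rintro c r p q ⟨h1, h2⟩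
    exact ⟨h1.symm, by rw [h2, RR.rr_invol n hn]⟩
  have hRGne : ∀ c r p q, RG c r p q → p ≠ q := by
    rintro c r p q ⟨h1, h2⟩ rfl
    exact RR.rr_ne n hn r (x (dd c) p) h2.symm
  have hRGsub : ∀ c r p q, RG c r p q → G.Adj p q := by
    rintro c r p q hR
    rw [hadj]
    refine ⟨hRGne c r p q hR, ?_⟩
    obtain ⟨h1, -⟩ := hR
    match c with
    | none => exact Or.inl h1
    | some none => exact Or.inr (Or.inl h1)
    | some (some a) => exact Or.inr (Or.inr ⟨a, h1⟩)
  have hRGuniq : ∀ c r v, ∃! w, RG c r v w := by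
    intro c r v
    have hbij := hbijpair c (dd c) (hcd c)
    let E1 := Equiv.ofBijective _ hbij
    refine ⟨E1.symm (x c v, RR.rr n r (x (dd c) v)), ?_, ?_⟩
    · have h := E1.apply_symm_apply (x c v, RR.rr n r (x (dd c) v))
      exact ⟨(congrArg Prod.fst h).symm, congrArg Prod.snd h⟩
    · rintro w ⟨h1, h2⟩
      rw [Equiv.eq_symm_apply]
      exact Prod.ext h1.symm h2
  let MG : Option (Option (Fin t)) × ZMod n → G.Subgraph :=
    fun cr => mkMatching G (RG cr.1 cr.2) (hRGsymm cr.1 cr.2) (hRGsub cr.1 cr.2)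
  have hMGadj : ∀ cr p q, (MG cr).Adj p q ↔ RG cr.1 cr.2 p q := fun _ _ _ => Iff.rfl
  have partG : IsOneFactorable G := by
    refine ⟨Set.range MG, ?_, ?_⟩
    · rintro M ⟨cr, rfl⟩
      exact mkMatching_isPerfectMatching _ _ _ _ (hRGuniq cr.1 cr.2)
    · intro e he
      revert he
      refine Sym2.ind (fun p q => ?_) e
      intro he
      rw [SimpleGraph.mem_edgeSet, hadj] at he
      obtain ⟨hne, hdisj⟩ := he
      have hc : ∃ c, x c p = x c q := by
        rcases hdisj with h | h | ⟨a, h⟩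
        exacts [⟨none, h⟩, ⟨some none, h⟩, ⟨some (some a), h⟩]
      obtain ⟨c, hxc⟩ := hc
      have hd : x (dd c) p ≠ x (dd c) q := fun h => hne (key c (dd c) (hcd c) p q hxc h)
      obtain ⟨r, hr⟩ := RR.rr_exists n hn hd
      refine ⟨MG (c, r), ⟨⟨(c, r), rfl⟩, ?_⟩, ?_⟩
      · exact SimpleGraph.Subgraph.mem_edgeSet.mpr ⟨hxc, hr.symm⟩
      · rintro M ⟨⟨⟨c', r'⟩, rfl⟩, hmem⟩
        obtain ⟨h1, h2⟩ := SimpleGraph.Subgraph.mem_edgeSet.mp hmem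
        have hcc : c' = c := by
          by_contra hcc
          exact hne (key c' c hcc p q h1 hxc)
        subst hcc
        have hrr : r' = r := RR.rr_unique n hn h2.symm hr
        subst hrr
        rfl
  -- Part 2 : Gᶜ is 1-factorable
  let A : Fin (n+1) → Fin (n+1) → Fin (n+1) → Fin (n+1) → Prop :=
    fun i i' j j' => j ≠ j' ∧ ∀ a, L a i j ≠ L a i' j'
  have hAcount1 : ∀ i i', i ≠ i' → ∀ j, Nat.card {j' // A i i' j j'} = n - t := by
    intro i i' hne j
    have h0 := countAux L hlatin horth i i' hne j
    rw [Nat.succ_sub_succ] at h0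
    rw [← h0]
    apply Nat.card_congr
    apply Equiv.subtypeEquivRight
    intro j'
    constructor
    · rintro ⟨h1, h2⟩; exact ⟨h1.symm, fun a => (h2 a).symm⟩
    · rintro ⟨h1, h2⟩; exact ⟨h1.symm, fun a => (h2 a).symm⟩
  have hAcount2 : ∀ i i', i ≠ i' → ∀ j', Nat.card {j // A i i' j j'} = n - t := by
    intro i i' hne j'
    have h0 := countAux L hlatin horth i' i (fun h => hne h.symm) j'
    rw [Nat.succ_sub_succ] at h0
    rw [← h0]
  have hgex : ∀ i i', i ≠ i' → ∃ g : Fin (n - t) → (Fin (n+1) → Fin (n+1)),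
      (∀ c, Function.Bijective (g c)) ∧ (∀ j j', A i i' j j' ↔ ∃ c, g c j = j') ∧
      (∀ c c' j, g c j = g c' j → c = c') :=
    fun i i' hne => bip_decomp (n - t) (A i i') (hAcount1 i i' hne) (hAcount2 i i' hne)
  choose gg hggbij hggcov hggdis using hgex
  let g' : Fin (n+1) → Fin (n+1) → Fin (n - t) → Fin (n+1) → Fin (n+1) :=
    fun i i' c j => if h : i ≠ i' then gg i i' h c j else j
  have hg'eq : ∀ i i' (h : i ≠ i') c j, g' i i' c j = gg i i' h c j := by
    intro i i' h c j
    show (if h : i ≠ i' then gg i i' h c j else j) = _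
    rw [dif_pos h]
  let RC : ZMod n × Fin (n - t) → (Fin (n+1) × Fin (n+1)) → (Fin (n+1) × Fin (n+1)) → Prop :=
    fun sc p q => RR.rr n sc.1 p.1 = q.1 ∧
      ((p.1 < q.1 ∧ q.2 = g' p.1 q.1 sc.2 p.2) ∨ (q.1 < p.1 ∧ p.2 = g' q.1 p.1 sc.2 q.2))
  have hRCsymm : ∀ sc p q, RC sc p q → RC sc q p := by
    rintro sc p q ⟨h0, hd⟩
    exact ⟨by rw [← h0, RR.rr_invol n hn], hd.symm⟩
  have hRCfacts : ∀ sc p q, RC sc p q →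
      p.1 ≠ q.1 ∧ p.2 ≠ q.2 ∧ ∀ a, L a p.1 p.2 ≠ L a q.1 q.2 := by
    rintro sc p q ⟨h0, hd⟩
    rcases hd with ⟨hlt, he⟩ | ⟨hlt, he⟩
    · have hne1 : p.1 ≠ q.1 := ne_of_lt hlt
      have hA1 : A p.1 q.1 p.2 q.2 := (hggcov p.1 q.1 hne1 p.2 q.2).mpr
        ⟨sc.2, by rw [← hg'eq p.1 q.1 hne1]; exact he.symm⟩
      exact ⟨hne1, hA1.1, hA1.2⟩
    · have hne1 : q.1 ≠ p.1 := ne_of_lt hlt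
      have hA1 : A q.1 p.1 q.2 p.2 := (hggcov q.1 p.1 hne1 q.2 p.2).mpr
        ⟨sc.2, by rw [← hg'eq q.1 p.1 hne1]; exact he.symm⟩
      exact ⟨hne1.symm, hA1.1.symm, fun a h => hA1.2 a h.symm⟩
  have hRCsub : ∀ sc p q, RC sc p q → Gᶜ.Adj p q := by
    intro sc p q hR
    obtain ⟨h1, h2, h3⟩ := hRCfacts sc p q hR
    rw [G.compl_adj]
    refine ⟨fun h => h1 (congrArg Prod.fst h), ?_⟩
    rw [hadj]
    rintro ⟨-, h | h | ⟨a, h⟩⟩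
    exacts [h1 h, h2 h, h3 a h]
  have hRCuniq : ∀ sc v, ∃! w, RC sc v w := by
    intro sc v
    rcases (RR.rr_ne n hn sc.1 v.1).lt_or_gt with hlt | hlt
    · -- i' < v.1 where i' = rr s v.1
      have hne1 : RR.rr n sc.1 v.1 ≠ v.1 := RR.rr_ne n hn sc.1 v.1
      have hfun : g' (RR.rr n sc.1 v.1) v.1 sc.2 = gg (RR.rr n sc.1 v.1) v.1 hne1 sc.2 :=
        funext (hg'eq _ _ hne1 sc.2)
      have hbij2 : Function.Bijective (g' (RR.rr n sc.1 v.1) v.1 sc.2) := by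
        rw [hfun]; exact hggbij _ _ hne1 sc.2
      let E2 := Equiv.ofBijective _ hbij2
      refine ⟨(RR.rr n sc.1 v.1, E2.symm v.2), ⟨rfl, Or.inr ⟨hlt, (E2.apply_symm_apply v.2).symm⟩⟩, ?_⟩
      rintro w ⟨h0', hd'⟩
      have hw1 : w.1 = RR.rr n sc.1 v.1 := h0'.symm
      rcases hd' with ⟨hlt', -⟩ | ⟨-, he'⟩
      · rw [hw1] at hlt'
        exact absurd hlt' (asymm hlt)
      · rw [hw1] at he'
        have : w.2 = E2.symm v.2 := by
          rw [Equiv.eq_symm_apply]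
          exact he'.symm
        exact Prod.ext hw1 this
    · have hne1 : v.1 ≠ RR.rr n sc.1 v.1 := fun h => RR.rr_ne n hn sc.1 v.1 h.symm
      refine ⟨(RR.rr n sc.1 v.1, g' v.1 (RR.rr n sc.1 v.1) sc.2 v.2), ⟨rfl, Or.inl ⟨hlt, rfl⟩⟩, ?_⟩
      rintro w ⟨h0', hd'⟩
      have hw1 : w.1 = RR.rr n sc.1 v.1 := h0'.symm
      rcases hd' with ⟨-, he'⟩ | ⟨hlt', -⟩
      · rw [hw1] at he'
        exact Prod.ext hw1 he'
      · rw [hw1] at hlt'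
        exact absurd hlt' (asymm hlt)
  let MC : ZMod n × Fin (n - t) → Gᶜ.Subgraph :=
    fun sc => mkMatching Gᶜ (RC sc) (hRCsymm sc) (hRCsub sc)
  have keyC : ∀ p q, Gᶜ.Adj p q → p.1 < q.1 →
      ∃! M, M ∈ Set.range MC ∧ s(p, q) ∈ M.edgeSet := by
    intro p q hcadj hlt
    have hne1 : p.1 ≠ q.1 := ne_of_lt hlt
    obtain ⟨hnepq, hnG⟩ := (G.compl_adj p q).mp hcadj
    rw [hadj] at hnG
    have hdis : ¬ (p.1 = q.1 ∨ p.2 = q.2 ∨ ∃ a, L a p.1 p.2 = L a q.1 q.2) :=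
      fun h => hnG ⟨hnepq, h⟩
    have hcol2 : p.2 ≠ q.2 := fun h => hdis (Or.inr (Or.inl h))
    have hsymb : ∀ a, L a p.1 p.2 ≠ L a q.1 q.2 := fun a h => hdis (Or.inr (Or.inr ⟨a, h⟩))
    obtain ⟨s, hs⟩ := RR.rr_exists n hn hne1
    obtain ⟨c, hc⟩ := (hggcov p.1 q.1 hne1 p.2 q.2).mp ⟨hcol2, hsymb⟩
    refine ⟨MC (s, c), ⟨⟨(s, c), rfl⟩, ?_⟩, ?_⟩
    · exact SimpleGraph.Subgraph.mem_edgeSet.mpr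
        ⟨hs, Or.inl ⟨hlt, by rw [hg'eq p.1 q.1 hne1]; exact hc.symm⟩⟩
    · rintro M ⟨⟨⟨s', c'⟩, rfl⟩, hmem⟩
      obtain ⟨h0', hd'⟩ := SimpleGraph.Subgraph.mem_edgeSet.mp hmem
      have hss : s' = s := RR.rr_unique n hn h0' hs
      subst hss
      rcases hd' with ⟨-, he'⟩ | ⟨hlt', -⟩
      · have he2 : gg p.1 q.1 hne1 c' p.2 = q.2 := by
          rw [← hg'eq p.1 q.1 hne1]; exact he'.symm
        have hcc : c' = c := hggdis p.1 q.1 hne1 c' c p.2 (he2.trans hc.symm)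
        subst hcc
        rfl
      · exact absurd hlt' (asymm hlt)
  refine ⟨partG, ⟨Set.range MC, ?_, ?_⟩⟩
  · rintro M ⟨sc, rfl⟩
    exact mkMatching_isPerfectMatching _ _ _ _ (hRCuniq sc)
  · intro e he
    revert he
    refine Sym2.ind (fun p q => ?_) e
    intro he
    rw [SimpleGraph.mem_edgeSet] at he
    have hne1 : p.1 ≠ q.1 := by
      obtain ⟨hnepq, hnG⟩ := (G.compl_adj p q).mp he
      rw [hadj] at hnG
      exact fun h => hnG ⟨hnepq, Or.inl h⟩
    rcases hne1.lt_or_gt with hlt | hlt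
    · exact keyC p q he hlt
    · rw [Sym2.eq_swap]
      exact keyC q p he.symm hlt
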